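/- For θ > 0, the function θ·coth(θ) is strictly greater than 1; consequently, the Hessian of the hyperbolic squared distance, H = 2J(uu^T + θcoth(θ)(J + xx^T − uu^T))J restricted to T_x H^n, is positive definite for all y ≠ x. -/

import Mathlib

/-- The Minkowski form `⟪x,y⟫_* = -x₀y₀ + Σ_{i≥1} x_i y_i` on `ℝ^{n+1}`. -/
noncomputable def mink {n : ℕ} (x y : EuclideanSpace ℝ (Fin (n + 1))) : ℝ :=
  (∑ i, x i * y i) - 2 * x 0 * y 0

lemma mink_split {n : ℕ} (x y : EuclideanSpace ℝ (Fin (n + 1))) :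
    mink x y = (∑ i ∈ Finset.univ.erase 0, x i * y i) - x 0 * y 0 := by
  rw [mink, ← Finset.add_sum_erase _ _ (Finset.mem_univ 0)]
  ring

/-- `θ cosh θ - sinh θ > 0` for `θ > 0`. -/
lemma aux_pos {s : ℝ} (hs : 0 < s) : Real.sinh s < s * Real.cosh s := by
  have key : StrictMonoOn (fun t : ℝ => t * Real.cosh t - Real.sinh t) (Set.Ici 0) := by
    apply strictMonoOn_of_deriv_pos (convex_Ici 0)
    · fun_prop
    · intro t ht
      rw [interior_Ici] at ht
      have h1 : HasDerivAt (fun t : ℝ => t * Real.cosh t - Real.sinh t)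
          (1 * Real.cosh t + t * Real.sinh t - Real.cosh t) t :=
        ((hasDerivAt_id t).mul (Real.hasDerivAt_cosh t)).sub (Real.hasDerivAt_sinh t)
      rw [h1.deriv]
      have h2 := Real.sinh_pos_iff.2 (Set.mem_Ioi.1 ht)
      nlinarith [mul_pos (Set.mem_Ioi.1 ht) h2]
  have := key (Set.self_mem_Ici) (Set.mem_Ici.2 hs.le) hs
  simp only [Real.cosh_zero, Real.sinh_zero, mul_zero, zero_mul, sub_zero] at this
  linarith

/-- On the tangent space, `mink` is nonnegative, and positive on nonzero vectors. -/
lemma tangent_nonneg {n : ℕ} (x v : EuclideanSpace ℝ (Fin (n + 1)))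
    (hx : mink x x = -1) (hx0 : 0 < x 0) (hxv : mink x v = 0) :
    0 ≤ mink v v ∧ (v ≠ 0 → 0 < mink v v) := by
  set E := Finset.univ.erase (0 : Fin (n + 1)) with hE
  have cs := Finset.sum_mul_sq_le_sq_mul_sq E (fun i => x i) (fun i => v i)
  have hxx := mink_split x x
  have hxv' := mink_split x v
  have hvv := mink_split v v
  simp only [← sq] at hxx hvv
  rw [hx] at hxx
  rw [hxv] at hxv'
  have hSx : (∑ i ∈ E, x i ^ 2) = x 0 ^ 2 - 1 := by rw [hE]; linarith
  have hP : (∑ i ∈ E, x i * v i) = x 0 * v 0 := by rw [hE]; linarith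
  rw [hSx, hP] at cs
  have hSv : 0 ≤ ∑ i ∈ E, v i ^ 2 := Finset.sum_nonneg fun i _ => sq_nonneg _
  have hnn : v 0 ^ 2 ≤ ∑ i ∈ E, v i ^ 2 := by nlinarith [mul_pos hx0 hx0]
  constructor
  · rw [hvv]; linarith
  · intro hv
    rw [hvv]
    rcases eq_or_ne (v 0) 0 with h0 | h0
    · have hex : ∃ i ∈ E, v i ≠ 0 := by
        by_contra hcon
        push_neg at hcon
        apply hv
        refine PiLp.ext fun i => ?_
        rcases eq_or_ne i 0 with rfl | hi
        · exact h0
        · exact hcon i (Finset.mem_erase.2 ⟨hi, Finset.mem_univ i⟩)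
      obtain ⟨i, hiE, hvi⟩ := hex
      have hpos : 0 < ∑ i ∈ E, v i ^ 2 :=
        Finset.sum_pos' (fun j _ => sq_nonneg _) ⟨i, hiE, by positivity⟩
      rw [h0]
      nlinarith
    · have hv02 : 0 < v 0 ^ 2 := by positivity
      nlinarith [mul_pos hx0 hx0]

/-- For `θ > 0` one has `θ coth θ > 1`; consequently the Hessian of the hyperbolic
squared distance, `H = 2J(uuᵀ + θcothθ(J + xxᵀ - uuᵀ))J` (given here as the bilinear
form `H(v,w) = 2(⟪u,v⟫_*⟪u,w⟫_* + θcothθ(⟪v,w⟫_* + ⟪x,v⟫_*⟪x,w⟫_* - ⟪u,v⟫_*⟪u,w⟫_*))`),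
is positive definite on the tangent space `T_x H^n = {v : ⟪x,v⟫_* = 0}`. -/
theorem stmt13 {n : ℕ} (x u : EuclideanSpace ℝ (Fin (n + 1)))
    (hx : mink x x = -1) (hx0 : 0 < x 0)
    (hu : mink u u = 1) (hxu : mink x u = 0)
    (θ : ℝ) (hθ : 0 < θ) :
    (∀ s : ℝ, 0 < s → 1 < s * (Real.cosh s / Real.sinh s)) ∧
    (∀ v : EuclideanSpace ℝ (Fin (n + 1)), mink x v = 0 → v ≠ 0 →
      0 < 2 * (mink u v * mink u v +
        θ * (Real.cosh θ / Real.sinh θ) *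
          (mink v v + mink x v * mink x v - mink u v * mink u v))) := by
  have hcoth : ∀ s : ℝ, 0 < s → 1 < s * (Real.cosh s / Real.sinh s) := by
    intro s hs
    have hsinh : 0 < Real.sinh s := Real.sinh_pos_iff.2 hs
    rw [mul_div_assoc', lt_div_iff₀ hsinh, one_mul]
    exact aux_pos hs
  refine ⟨hcoth, fun v hxv hv => ?_⟩
  have hθc := hcoth θ hθ
  set c := θ * (Real.cosh θ / Real.sinh θ) with hc
  have hvv := (tangent_nonneg x v hx hx0 hxv).2 hv
  set t := mink u v with ht
  -- w = v - t • u is tangent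
  have hw : mink x (WithLp.toLp 2 (fun i => v i - t * u i)) = 0 := by
    have e1 : (∑ i, x i * (v i - t * u i)) = (∑ i, x i * v i) - t * ∑ i, x i * u i := by
      rw [Finset.mul_sum, ← Finset.sum_sub_distrib]
      exact Finset.sum_congr rfl fun i _ => by ring
    rw [mink]; simp only [PiLp.toLp_apply]; rw [e1]
    rw [mink] at hxu hxv
    linear_combination hxv - t * hxu
  have hwnn := (tangent_nonneg x (WithLp.toLp 2 (fun i => v i - t * u i)) hx hx0 hw).1
  have hexp : mink (WithLp.toLp 2 (fun i => v i - t * u i)) (WithLp.toLp 2 (fun i => v i - t * u i))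
      = mink v v - 2 * t * mink u v + t ^ 2 * mink u u := by
    have e : (∑ i, (v i - t * u i) * (v i - t * u i))
        = (∑ i, v i * v i) - 2 * t * (∑ i, u i * v i) + t ^ 2 * ∑ i, u i * u i := by
      rw [Finset.mul_sum, Finset.mul_sum, ← Finset.sum_sub_distrib, ← Finset.sum_add_distrib]
      exact Finset.sum_congr rfl fun i _ => by ring
    simp only [mink, PiLp.toLp_apply]
    rw [e]; ring
  rw [hexp, hu] at hwnn
  have hcs : t ^ 2 ≤ mink v v := by nlinarith
  rw [hxv]
  nlinarith [hcs, hvv, hθc]
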